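/- Let n ≥ 1, m ≥ 0 and q ≥ 0 be integers and let b be either 0 or an odd integer with 0 < b < 2^q, with m + b/2^q > 0. Let N be the canonical form of n. Then for every number H whose value is −(m + b/2^q), N : H = n − 1 + 1/2^m − b/2^{m+q+1}. -/

import Mathlib

namespace SetTheory

/-- Pre-games (removed from Mathlib; restored here with Mathlib's old definition). -/
inductive PGame.{w} : Type (w + 1)
  | mk : ∀ α β : Type w, (α → PGame) → (β → PGame) → PGame

namespace PGame

def LeftMoves : PGame → Type _
  | mk l _ _ _ => l

def RightMoves : PGame → Type _
  | mk _ r _ _ => r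

def moveLeft : ∀ g : PGame, LeftMoves g → PGame
  | mk _ _ L _ => L

def moveRight : ∀ g : PGame, RightMoves g → PGame
  | mk _ _ _ R => R

/-- Simultaneous definition of `≤` (first component) and `⧏` (second component). -/
noncomputable def leLF : PGame → PGame → Prop × Prop := fun x =>
  PGame.rec (motive := fun _ => PGame → Prop × Prop)
    (fun xl xr xL xR IHxl IHxr y =>
      PGame.rec (motive := fun _ => Prop × Prop)
        (fun yl yr yL yR IHyl IHyr =>
          ((∀ i, (IHxl i (mk yl yr yL yR)).2) ∧ ∀ j, (IHyr j).2,
            (∃ i, (IHyl i).1) ∨ ∃ j, (IHxr j (mk yl yr yL yR)).1)) y) x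

noncomputable instance : LE PGame := ⟨fun x y => (leLF x y).1⟩

noncomputable instance : LT PGame := ⟨fun x y => x ≤ y ∧ ¬ y ≤ x⟩

def Numeric : PGame → Prop
  | ⟨_, _, L, R⟩ => (∀ i j, L i < R j) ∧ (∀ i, Numeric (L i)) ∧ ∀ j, Numeric (R j)

instance : Zero PGame := ⟨mk PEmpty PEmpty PEmpty.elim PEmpty.elim⟩

instance : One PGame := ⟨mk PUnit PEmpty (fun _ => 0) PEmpty.elim⟩

def neg : PGame → PGame
  | mk l r L R => mk r l (fun j => neg (R j)) (fun i => neg (L i))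

instance : Neg PGame := ⟨neg⟩

noncomputable def add : PGame → PGame → PGame := fun x =>
  PGame.rec (motive := fun _ => PGame → PGame)
    (fun xl xr xL xR IHxl IHxr y =>
      PGame.rec (motive := fun _ => PGame)
        (fun yl yr yL yR IHyl IHyr =>
          mk (xl ⊕ yl) (xr ⊕ yr) (Sum.elim (fun i => IHxl i (mk yl yr yL yR)) IHyl)
            (Sum.elim (fun j => IHxr j (mk yl yr yL yR)) IHyr)) y) x

noncomputable instance : Add PGame := ⟨add⟩

def powHalf : ℕ → PGame
  | 0 => 1
  | n + 1 => mk PUnit PUnit (fun _ => 0) (fun _ => powHalf n)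

def equivRel (x y : PGame) : Prop := x ≤ y ∧ y ≤ x

noncomputable instance setoid : Setoid PGame :=
  ⟨Relation.EqvGen equivRel, Relation.EqvGen.is_equivalence _⟩

end PGame

abbrev Game := Quotient PGame.setoid

namespace Game

noncomputable instance : Zero Game := ⟨⟦0⟧⟩

noncomputable instance : Add Game := ⟨fun a b => ⟦a.out + b.out⟧⟩

noncomputable instance : Neg Game := ⟨fun a => ⟦-a.out⟧⟩

noncomputable instance : Sub Game := ⟨fun a b => a + -b⟩

noncomputable instance : SMul ℤ Game := ⟨zsmulRec nsmulRec⟩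

end Game

end SetTheory

noncomputable section

open SetTheory PGame

universe u

/-- Ordinal sum `G : H`: players may move in the base `G` (ending all play in the
subordinate) or in the subordinate `H`. -/
def ordinalSum (G : PGame.{u}) : PGame.{u} → PGame.{u}
  | ⟨yl, yr, yL, yR⟩ =>
    ⟨G.LeftMoves ⊕ yl, G.RightMoves ⊕ yr,
     Sum.elim G.moveLeft fun j => ordinalSum G (yL j),
     Sum.elim G.moveRight fun j => ordinalSum G (yR j)⟩

/-- `G ≜ H`: equivalence modulo domination.  Every Left option of `G` is `≤` some Left
option of `H`, every Left option of `H` is `≤` some Left option of `G`, every Right option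
of `G` is `≥` some Right option of `H`, and every Right option of `H` is `≥` some Right
option of `G`. -/
def EquivDom (G H : PGame) : Prop :=
  (∀ i, ∃ j, G.moveLeft i ≤ H.moveLeft j) ∧
  (∀ j, ∃ i, H.moveLeft j ≤ G.moveLeft i) ∧
  (∀ i, ∃ j, H.moveRight j ≤ G.moveRight i) ∧
  (∀ j, ∃ i, G.moveRight i ≤ H.moveRight j)

/-- The ball `⟨a | b⟩`: the game with exactly one Left option `a` and exactly one Right
option `b`. -/
def ball (a b : PGame.{u}) : PGame.{u} :=
  ⟨PUnit, PUnit, fun _ => a, fun _ => b⟩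

/-- The canonical form of a natural number: `0 ≅ ⟨ | ⟩` and `n+1 ≅ ⟨n | ⟩`. -/
def canonNat : ℕ → PGame
  | 0 => 0
  | n + 1 => ⟨PUnit, PEmpty, fun _ => canonNat n, PEmpty.elim⟩

/-- The canonical form of an integer: for `n ≥ 0` it is `canonNat n`, and the canonical
form of a negative integer is the negative of the canonical form of its absolute value. -/
def canonInt (n : ℤ) : PGame :=
  if 0 ≤ n then canonNat n.toNat else -canonNat (-n).toNat

/-- The game value of the dyadic rational `a / 2 ^ q`. -/
def dyadicVal (a : ℤ) (q : ℕ) : Game :=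
  a • (⟦powHalf q⟧ : Game)


namespace SetTheory.PGame

abbrev LF (x y : PGame) : Prop := ¬ y ≤ x

infix:50 " ⧏ " => SetTheory.PGame.LF

theorem leLF_mk_fst (xl xr : Type u) (xL : xl → PGame.{u}) (xR : xr → PGame.{u}) (yl yr : Type u)
    (yL : yl → PGame.{u}) (yR : yr → PGame.{u}) :
    (leLF (mk xl xr xL xR) (mk yl yr yL yR)).1 =
      ((∀ i, (leLF (xL i) (mk yl yr yL yR)).2) ∧ ∀ j, (leLF (mk xl xr xL xR) (yR j)).2) := rfl

theorem leLF_mk_snd (xl xr : Type u) (xL : xl → PGame.{u}) (xR : xr → PGame.{u}) (yl yr : Type u)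
    (yL : yl → PGame.{u}) (yR : yr → PGame.{u}) :
    (leLF (mk xl xr xL xR) (mk yl yr yL yR)).2 =
      ((∃ i, (leLF (mk xl xr xL xR) (yL i)).1) ∨ ∃ j, (leLF (xR j) (mk yl yr yL yR)).1) := rfl

theorem leLF_snd_iff : ∀ x y : PGame.{u},
    ((leLF x y).2 ↔ ¬ (leLF y x).1) ∧ ((leLF y x).2 ↔ ¬ (leLF x y).1) := by
  intro x
  induction x with
  | mk xl xr xL xR ihxl ihxr =>
  intro y
  induction y with
  | mk yl yr yL yR ihyl ihyr =>
  have h1 : ∀ i, (leLF (yL i) (mk xl xr xL xR)).2 ↔ ¬ (leLF (mk xl xr xL xR) (yL i)).1 :=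
    fun i => (ihyl i).2
  have h2 : ∀ j, (leLF (mk yl yr yL yR) (xR j)).2 ↔ ¬ (leLF (xR j) (mk yl yr yL yR)).1 :=
    fun j => (ihxr j _).2
  have h3 : ∀ i, (leLF (xL i) (mk yl yr yL yR)).2 ↔ ¬ (leLF (mk yl yr yL yR) (xL i)).1 :=
    fun i => (ihxl i _).1
  have h4 : ∀ j, (leLF (mk xl xr xL xR) (yR j)).2 ↔ ¬ (leLF (yR j) (mk xl xr xL xR)).1 :=
    fun j => (ihyr j).1
  simp only [leLF_mk_fst, leLF_mk_snd, h1, h2, h3, h4, not_and_or, not_forall, not_not]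
  exact ⟨trivial, trivial⟩

theorem lf_iff_leLF (x y : PGame.{u}) : x ⧏ y ↔ (leLF x y).2 := ((leLF_snd_iff x y).1).symm

theorem le_iff_forall_lf {x y : PGame.{u}} :
    x ≤ y ↔ (∀ i, x.moveLeft i ⧏ y) ∧ ∀ j, x ⧏ y.moveRight j := by
  cases x; cases y
  simp only [lf_iff_leLF]
  rfl

theorem lf_iff_exists_le {x y : PGame.{u}} :
    x ⧏ y ↔ (∃ i, x ≤ y.moveLeft i) ∨ ∃ j, x.moveRight j ≤ y := by
  cases x; cases y
  rw [lf_iff_leLF]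
  rfl

theorem lf_of_le_moveLeft {x y : PGame.{u}} {i : y.LeftMoves} (h : x ≤ y.moveLeft i) : x ⧏ y :=
  lf_iff_exists_le.2 (Or.inl ⟨i, h⟩)

theorem lf_of_moveRight_le {x y : PGame.{u}} {j : x.RightMoves} (h : x.moveRight j ≤ y) : x ⧏ y :=
  lf_iff_exists_le.2 (Or.inr ⟨j, h⟩)

theorem _root_.LE.le.moveLeft_lf {x y : PGame.{u}} (h : x ≤ y) (i : x.LeftMoves) :
    x.moveLeft i ⧏ y := (le_iff_forall_lf.1 h).1 i

theorem _root_.LE.le.lf_moveRight {x y : PGame.{u}} (h : x ≤ y) (j : y.RightMoves) :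
    x ⧏ y.moveRight j := (le_iff_forall_lf.1 h).2 j

theorem le_refl' (x : PGame.{u}) : x ≤ x := by
  induction x with
  | mk xl xr xL xR ihl ihr =>
    exact le_iff_forall_lf.2 ⟨fun i => lf_of_le_moveLeft (i := i) (ihl i),
      fun j => lf_of_moveRight_le (j := j) (ihr j)⟩

theorem le_trans_aux : ∀ x y z : PGame.{u},
    (x ≤ y → y ≤ z → x ≤ z) ∧ (y ≤ z → z ≤ x → y ≤ x) ∧ (z ≤ x → x ≤ y → z ≤ y) := by
  intro x
  induction x with
  | mk xl xr xL xR ihxl ihxr =>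
  intro y
  induction y with
  | mk yl yr yL yR ihyl ihyr =>
  intro z
  induction z with
  | mk zl zr zL zR ihzl ihzr =>
  refine ⟨fun h1 h2 => ?_, fun h1 h2 => ?_, fun h1 h2 => ?_⟩
  · refine le_iff_forall_lf.2 ⟨fun i => ?_, fun j => ?_⟩
    · exact fun h3 => h1.moveLeft_lf i ((ihxl i _ _).2.1 h2 h3)
    · exact fun h3 => h2.lf_moveRight j ((ihzr j).2.2 h3 h1)
  · refine le_iff_forall_lf.2 ⟨fun i => ?_, fun j => ?_⟩
    · exact fun h3 => h1.moveLeft_lf i ((ihyl i _).2.2 h2 h3)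
    · exact fun h3 => h2.lf_moveRight j ((ihxr j _ _).1 h3 h1)
  · refine le_iff_forall_lf.2 ⟨fun i => ?_, fun j => ?_⟩
    · exact fun h3 => h1.moveLeft_lf i ((ihzl i).1 h2 h3)
    · exact fun h3 => h2.lf_moveRight j ((ihyr j _).2.1 h3 h1)

instance : Preorder PGame.{u} where
  le := (· ≤ ·)
  lt := (· < ·)
  le_refl := le_refl'
  le_trans := fun x y z => (le_trans_aux x y z).1
  lt_iff_le_not_ge := fun _ _ => Iff.rfl

theorem moveLeft_lf {x : PGame.{u}} (i : x.LeftMoves) : x.moveLeft i ⧏ x :=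
  lf_of_le_moveLeft le_rfl

theorem lf_moveRight {x : PGame.{u}} (j : x.RightMoves) : x ⧏ x.moveRight j :=
  lf_of_moveRight_le le_rfl

theorem lf_of_lf_of_le {x y z : PGame.{u}} (h1 : x ⧏ y) (h2 : y ≤ z) : x ⧏ z :=
  fun h3 => h1 (h2.trans h3)

theorem lf_of_le_of_lf {x y z : PGame.{u}} (h1 : x ≤ y) (h2 : y ⧏ z) : x ⧏ z :=
  fun h3 => h2 (h3.trans h1)

theorem lf_of_lt {x y : PGame.{u}} (h : x < y) : x ⧏ y := h.2

instance : HasEquiv PGame.{u} := ⟨fun x y => x ≤ y ∧ y ≤ x⟩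

theorem equiv_refl' (x : PGame.{u}) : x ≈ x := ⟨le_rfl, le_rfl⟩

theorem equiv_symm' {x y : PGame.{u}} (h : x ≈ y) : y ≈ x := ⟨h.2, h.1⟩

theorem equiv_trans' {x y z : PGame.{u}} (h1 : x ≈ y) (h2 : y ≈ z) : x ≈ z :=
  ⟨h1.1.trans h2.1, h2.2.trans h1.2⟩

theorem eqvGen_iff {x y : PGame.{u}} : Relation.EqvGen equivRel x y ↔ x ≈ y := by
  constructor
  · intro h
    induction h with
    | rel _ _ h => exact h
    | refl x => exact equiv_refl' x
    | symm _ _ _ ih => exact equiv_symm' ih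
    | trans _ _ _ _ _ ih1 ih2 => exact equiv_trans' ih1 ih2
  · intro h
    exact Relation.EqvGen.rel _ _ h

theorem game_eq {x y : PGame.{u}} (h : x ≈ y) : (⟦x⟧ : Game) = ⟦y⟧ :=
  Quotient.sound (eqvGen_iff.2 h)

theorem equiv_iff_game_eq {x y : PGame.{u}} : x ≈ y ↔ (⟦x⟧ : Game) = ⟦y⟧ :=
  ⟨game_eq, fun h => eqvGen_iff.1 (Quotient.exact h)⟩

/-! addition -/

theorem leftMoves_add (x y : PGame.{u}) : (x + y).LeftMoves = (x.LeftMoves ⊕ y.LeftMoves) := by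
  cases x; cases y; rfl

theorem rightMoves_add (x y : PGame.{u}) :
    (x + y).RightMoves = (x.RightMoves ⊕ y.RightMoves) := by
  cases x; cases y; rfl

def toLeftMovesAdd {x y : PGame.{u}} : x.LeftMoves ⊕ y.LeftMoves ≃ (x + y).LeftMoves :=
  Equiv.cast (leftMoves_add x y).symm

def toRightMovesAdd {x y : PGame.{u}} : x.RightMoves ⊕ y.RightMoves ≃ (x + y).RightMoves :=
  Equiv.cast (rightMoves_add x y).symm

theorem add_moveLeft_inl (x : PGame.{u}) {y : PGame.{u}} (i : x.LeftMoves) :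
    (x + y).moveLeft (toLeftMovesAdd (Sum.inl i)) = x.moveLeft i + y := by
  cases x; cases y; rfl

theorem add_moveLeft_inr (x : PGame.{u}) {y : PGame.{u}} (i : y.LeftMoves) :
    (x + y).moveLeft (toLeftMovesAdd (Sum.inr i)) = x + y.moveLeft i := by
  cases x; cases y; rfl

theorem add_moveRight_inl (x : PGame.{u}) {y : PGame.{u}} (i : x.RightMoves) :
    (x + y).moveRight (toRightMovesAdd (Sum.inl i)) = x.moveRight i + y := by
  cases x; cases y; rfl

theorem add_moveRight_inr (x : PGame.{u}) {y : PGame.{u}} (i : y.RightMoves) :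
    (x + y).moveRight (toRightMovesAdd (Sum.inr i)) = x + y.moveRight i := by
  cases x; cases y; rfl

theorem leftMoves_add_cases {x y : PGame.{u}} (k : (x + y).LeftMoves)
    {P : (x + y).LeftMoves → Prop}
    (hl : ∀ i, P (toLeftMovesAdd (Sum.inl i))) (hr : ∀ i, P (toLeftMovesAdd (Sum.inr i))) :
    P k := by
  rw [← toLeftMovesAdd.apply_symm_apply k]
  rcases toLeftMovesAdd.symm k with i | i
  · exact hl i
  · exact hr i

theorem rightMoves_add_cases {x y : PGame.{u}} (k : (x + y).RightMoves)
    {P : (x + y).RightMoves → Prop}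
    (hl : ∀ j, P (toRightMovesAdd (Sum.inl j))) (hr : ∀ j, P (toRightMovesAdd (Sum.inr j))) :
    P k := by
  rw [← toRightMovesAdd.apply_symm_apply k]
  rcases toRightMovesAdd.symm k with j | j
  · exact hl j
  · exact hr j

instance isEmpty_zero_rightMoves : IsEmpty (0 : PGame.{u}).RightMoves :=
  ⟨fun j => PEmpty.elim j⟩

instance isEmpty_add_rightMoves {x y : PGame.{u}} [IsEmpty x.RightMoves]
    [IsEmpty y.RightMoves] : IsEmpty (x + y).RightMoves := by
  rw [rightMoves_add]; infer_instance

theorem add_le_add_right_aux : ∀ x y z : PGame.{u},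
    (x ≤ y → x + z ≤ y + z) ∧ (x ⧏ y → x + z ⧏ y + z) := by
  intro x
  induction x with
  | mk xl xr xL xR ihxl ihxr =>
  intro y
  induction y with
  | mk yl yr yL yR ihyl ihyr =>
  intro z
  induction z with
  | mk zl zr zL zR ihzl ihzr =>
  constructor
  · intro h
    rw [le_iff_forall_lf]
    constructor
    · rintro (i | i)
      · exact (ihxl i _ _).2 (h.moveLeft_lf i)
      · exact lf_of_le_moveLeft (i := Sum.inr i) ((ihzl i).1 h)
    · rintro (j | j)
      · exact (ihyr j _).2 (h.lf_moveRight j)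
      · exact lf_of_moveRight_le (j := Sum.inr j) ((ihzr j).1 h)
  · intro h
    rcases lf_iff_exists_le.1 h with ⟨i, hi⟩ | ⟨j, hj⟩
    · exact lf_of_le_moveLeft (i := Sum.inl i) ((ihyl i _).1 hi)
    · exact lf_of_moveRight_le (j := Sum.inl j) ((ihxr j _ _).1 hj)

theorem pg_add_comm_le : ∀ x y : PGame.{u}, x + y ≤ y + x := by
  intro x
  induction x with
  | mk xl xr xL xR ihxl ihxr =>
  intro y
  induction y with
  | mk yl yr yL yR ihyl ihyr =>
  rw [le_iff_forall_lf]
  constructor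
  · rintro (i | i)
    · exact lf_of_le_moveLeft (i := Sum.inr i) (ihxl i _)
    · exact lf_of_le_moveLeft (i := Sum.inl i) (ihyl i)
  · rintro (j | j)
    · exact lf_of_moveRight_le (j := Sum.inr j) (ihyr j)
    · exact lf_of_moveRight_le (j := Sum.inl j) (ihxr j _)

theorem add_zero_equiv (x : PGame.{u}) : x + 0 ≈ x := by
  induction x with
  | mk xl xr xL xR ihl ihr =>
  constructor
  · rw [le_iff_forall_lf]
    constructor
    · rintro (i | i)
      · exact lf_of_le_moveLeft (i := i) (ihl i).1
      · exact PEmpty.elim i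
    · intro j
      exact lf_of_moveRight_le (j := Sum.inl j) (ihr j).1
  · rw [le_iff_forall_lf]
    constructor
    · intro i
      exact lf_of_le_moveLeft (i := Sum.inl i) (ihl i).2
    · rintro (j | j)
      · exact lf_of_moveRight_le (j := j) (ihr j).2
      · exact PEmpty.elim j

theorem pg_add_assoc_le : ∀ x y z : PGame.{u},
    (x + y) + z ≤ x + (y + z) ∧ x + (y + z) ≤ (x + y) + z := by
  intro x
  induction x with
  | mk xl xr xL xR ihxl ihxr =>
  intro y
  induction y with
  | mk yl yr yL yR ihyl ihyr =>
  intro z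
  induction z with
  | mk zl zr zL zR ihzl ihzr =>
  constructor
  · rw [le_iff_forall_lf]
    constructor
    · rintro ((i | i) | i)
      · exact lf_of_le_moveLeft (i := Sum.inl i) (ihxl i _ _).1
      · exact lf_of_le_moveLeft (i := Sum.inr (Sum.inl i)) (ihyl i _).1
      · exact lf_of_le_moveLeft (i := Sum.inr (Sum.inr i)) (ihzl i).1
    · rintro (j | j | j)
      · exact lf_of_moveRight_le (j := Sum.inl (Sum.inl j)) (ihxr j _ _).1
      · exact lf_of_moveRight_le (j := Sum.inl (Sum.inr j)) (ihyr j _).1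
      · exact lf_of_moveRight_le (j := Sum.inr j) (ihzr j).1
  · rw [le_iff_forall_lf]
    constructor
    · rintro (i | i | i)
      · exact lf_of_le_moveLeft (i := Sum.inl (Sum.inl i)) (ihxl i (mk yl yr yL yR) (mk zl zr zL zR)).2
      · exact lf_of_le_moveLeft (i := Sum.inl (Sum.inr i)) (ihyl i (mk zl zr zL zR)).2
      · exact lf_of_le_moveLeft (i := Sum.inr i) (ihzl i).2
    · rintro ((j | j) | j)
      · exact lf_of_moveRight_le (j := Sum.inl j) (ihxr j (mk yl yr yL yR) (mk zl zr zL zR)).2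
      · exact lf_of_moveRight_le (j := Sum.inr (Sum.inl j)) (ihyr j (mk zl zr zL zR)).2
      · exact lf_of_moveRight_le (j := Sum.inr (Sum.inr j)) (ihzr j).2

theorem neg_le_neg_aux : ∀ x y : PGame.{u}, (x ≤ y → -y ≤ -x) ∧ (x ⧏ y → -y ⧏ -x) := by
  intro x
  induction x with
  | mk xl xr xL xR ihxl ihxr =>
  intro y
  induction y with
  | mk yl yr yL yR ihyl ihyr =>
  constructor
  · intro h
    rw [le_iff_forall_lf]
    constructor
    · intro i
      exact (ihyr i).2 (h.lf_moveRight i)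
    · intro j
      exact (ihxl j _).2 (h.moveLeft_lf j)
  · intro h
    rcases lf_iff_exists_le.1 h with ⟨i, hi⟩ | ⟨j, hj⟩
    · exact lf_of_moveRight_le (j := i) ((ihyl i).1 hi)
    · exact lf_of_le_moveLeft (i := j) ((ihxr j _).1 hj)

theorem neg_add_cancel_aux (x : PGame.{u}) : -x + x ≤ 0 ∧ 0 ≤ -x + x := by
  induction x with
  | mk xl xr xL xR ihl ihr =>
  constructor
  · rw [le_iff_forall_lf]
    constructor
    · rintro (i | i)
      · show -(xR i) + mk xl xr xL xR ⧏ 0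
        exact lf_of_moveRight_le (j := (toRightMovesAdd (Sum.inr i) : (-(xR i) + mk xl xr xL xR).RightMoves))
          ((add_moveRight_inr (-(xR i)) (y := mk xl xr xL xR) i).trans_le (ihr i).1)
      · show -(mk xl xr xL xR) + xL i ⧏ 0
        exact lf_of_moveRight_le (j := (toRightMovesAdd (Sum.inl i) : (-(mk xl xr xL xR) + xL i).RightMoves))
          ((add_moveRight_inl (-(mk xl xr xL xR)) (y := xL i) i).trans_le (ihl i).1)
    · rintro ⟨⟩
  · rw [le_iff_forall_lf]
    constructor
    · rintro ⟨⟩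
    · rintro (j | j)
      · show 0 ⧏ -(xL j) + mk xl xr xL xR
        exact lf_of_le_moveLeft (i := (toLeftMovesAdd (Sum.inr j) : (-(xL j) + mk xl xr xL xR).LeftMoves))
          ((ihl j).2.trans_eq (add_moveLeft_inr (-(xL j)) (y := mk xl xr xL xR) j).symm)
      · show 0 ⧏ -(mk xl xr xL xR) + xR j
        exact lf_of_le_moveLeft (i := (toLeftMovesAdd (Sum.inl j) : (-(mk xl xr xL xR) + xR j).LeftMoves))
          ((ihr j).2.trans_eq (add_moveLeft_inl (-(mk xl xr xL xR)) (y := xR j) j).symm)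

theorem pg_add_le_add_right {x y : PGame.{u}} (h : x ≤ y) (z : PGame.{u}) : x + z ≤ y + z :=
  (add_le_add_right_aux x y z).1 h

theorem pg_add_le_add_left {x y : PGame.{u}} (h : x ≤ y) (z : PGame.{u}) : z + x ≤ z + y :=
  (pg_add_comm_le z x).trans ((pg_add_le_add_right h z).trans (pg_add_comm_le y z))

theorem add_congr' {a b c d : PGame.{u}} (h1 : a ≈ b) (h2 : c ≈ d) : a + c ≈ b + d :=
  ⟨(pg_add_le_add_right h1.1 c).trans (pg_add_le_add_left h2.1 b),
    (pg_add_le_add_right h1.2 d).trans (pg_add_le_add_left h2.2 a)⟩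

theorem neg_congr' {a b : PGame.{u}} (h : a ≈ b) : -a ≈ -b :=
  ⟨(neg_le_neg_aux b a).1 h.2, (neg_le_neg_aux a b).1 h.1⟩

/-! the game quotient -/

theorem mk_out_equiv (x : PGame.{u}) : (⟦x⟧ : Game.{u}).out ≈ x :=
  eqvGen_iff.1 (Quotient.exact (Quotient.out_eq (⟦x⟧ : Game.{u})))

@[simp] theorem quot_zero : (⟦0⟧ : Game.{u}) = 0 := rfl

noncomputable instance : One Game.{u} := ⟨⟦1⟧⟩

@[simp] theorem quot_one : (⟦1⟧ : Game.{u}) = 1 := rfl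

@[simp] theorem quot_add (x y : PGame.{u}) : (⟦x + y⟧ : Game.{u}) = ⟦x⟧ + ⟦y⟧ :=
  game_eq (add_congr' (equiv_symm' (mk_out_equiv x)) (equiv_symm' (mk_out_equiv y)))

@[simp] theorem quot_neg (x : PGame.{u}) : (⟦-x⟧ : Game.{u}) = -⟦x⟧ :=
  game_eq (neg_congr' (equiv_symm' (mk_out_equiv x)))

theorem le_iff_game_le {x y : PGame.{u}} : x ≤ y ↔ (⟦x⟧ : Game.{u}) ≤ ⟦y⟧ := by
  constructor
  · intro h
    show Relation.TransGen (fun a b : PGame.{u} => a ≤ b ∨ Relation.EqvGen equivRel a b) x y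
    exact Relation.TransGen.single (Or.inl h)
  · intro h
    change Relation.TransGen (fun a b : PGame.{u} => a ≤ b ∨ Relation.EqvGen equivRel a b) x y at h
    induction h with
    | single h =>
      rcases h with h | h
      · exact h
      · exact (eqvGen_iff.1 h).1
    | tail _ h ih =>
      rcases h with h | h
      · exact ih.trans h
      · exact ih.trans (eqvGen_iff.1 h).1

noncomputable instance : PartialOrder Game.{u} :=
  { (inferInstance : Preorder Game.{u}) with
    le_antisymm := by
      rintro ⟨x⟩ ⟨y⟩ h1 h2
      exact game_eq ⟨le_iff_game_le.2 h1, le_iff_game_le.2 h2⟩ }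

theorem lt_iff_game_lt {x y : PGame.{u}} : x < y ↔ (⟦x⟧ : Game.{u}) < ⟦y⟧ :=
  ⟨fun h => lt_iff_le_not_ge.2 ⟨le_iff_game_le.1 h.1, fun h' => h.2 (le_iff_game_le.2 h')⟩,
    fun h => ⟨le_iff_game_le.2 (lt_iff_le_not_ge.1 h).1,
      fun h' => (lt_iff_le_not_ge.1 h).2 (le_iff_game_le.1 h')⟩⟩

noncomputable instance : AddCommGroup Game.{u} where
  add := (· + ·)
  zero := 0
  neg := Neg.neg
  sub := fun a b => a - b
  nsmul := nsmulRec
  zsmul := fun n a => n • a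
  add_assoc := by
    rintro ⟨x⟩ ⟨y⟩ ⟨z⟩
    change (⟦x⟧ + ⟦y⟧ : Game.{u}) + ⟦z⟧ = ⟦x⟧ + (⟦y⟧ + ⟦z⟧)
    rw [← quot_add, ← quot_add, ← quot_add, ← quot_add]
    exact game_eq ⟨(pg_add_assoc_le x y z).1, (pg_add_assoc_le x y z).2⟩
  zero_add := by
    rintro ⟨x⟩
    change (0 + ⟦x⟧ : Game.{u}) = ⟦x⟧
    rw [← quot_zero, ← quot_add]
    exact game_eq (equiv_trans' ⟨pg_add_comm_le _ _, pg_add_comm_le _ _⟩ (add_zero_equiv x))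
  add_zero := by
    rintro ⟨x⟩
    change (⟦x⟧ + 0 : Game.{u}) = ⟦x⟧
    rw [← quot_zero, ← quot_add]
    exact game_eq (add_zero_equiv x)
  add_comm := by
    rintro ⟨x⟩ ⟨y⟩
    change (⟦x⟧ + ⟦y⟧ : Game.{u}) = ⟦y⟧ + ⟦x⟧
    rw [← quot_add, ← quot_add]
    exact game_eq ⟨pg_add_comm_le _ _, pg_add_comm_le _ _⟩
  neg_add_cancel := by
    rintro ⟨x⟩
    change (-⟦x⟧ + ⟦x⟧ : Game.{u}) = 0
    rw [← quot_neg, ← quot_add, ← quot_zero]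
    exact game_eq (neg_add_cancel_aux x)
  nsmul_zero := fun _ => rfl
  nsmul_succ := fun _ _ => rfl
  zsmul_zero' := fun _ => rfl
  zsmul_succ' := fun _ _ => rfl
  zsmul_neg' := fun _ _ => rfl
  sub_eq_add_neg := fun _ _ => rfl

instance : IsOrderedAddMonoid Game.{u} where
  add_le_add_left := by
    rintro ⟨a⟩ ⟨b⟩ h ⟨c⟩
    change (⟦a⟧ + ⟦c⟧ : Game.{u}) ≤ ⟦b⟧ + ⟦c⟧
    rw [← quot_add, ← quot_add]
    exact le_iff_game_le.1 (pg_add_le_add_right (le_iff_game_le.2 h) _)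

theorem zero_lt_one : (0 : PGame.{u}) < 1 :=
  ⟨le_iff_forall_lf.2 ⟨fun i => PEmpty.elim i, fun j => PEmpty.elim j⟩,
    fun h => h.moveLeft_lf PUnit.unit le_rfl⟩

/-! powHalf -/

theorem powHalf_zero : powHalf.{u} 0 = 1 := rfl

theorem powHalf_moveLeft (n : ℕ) (i) : (powHalf.{u} n).moveLeft i = 0 := by
  cases n <;> rfl

theorem powHalf_succ_moveRight (n : ℕ) (i) : (powHalf.{u} (n + 1)).moveRight i = powHalf n := rfl

theorem zero_lf_powHalf (n : ℕ) : (0 : PGame.{u}) ⧏ powHalf n := by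
  cases n <;> exact lf_of_le_moveLeft (i := PUnit.unit) le_rfl

theorem powHalf_pos (n : ℕ) : (0 : PGame.{u}) < powHalf n := by
  refine ⟨le_iff_forall_lf.2 ⟨fun i => PEmpty.elim i, fun j => ?_⟩, zero_lf_powHalf n⟩
  cases n with
  | zero => exact PEmpty.elim j
  | succ k => exact zero_lf_powHalf k

theorem powHalf_succ_le (k : ℕ) : powHalf.{u} (k + 1) ≤ powHalf k := by
  induction k with
  | zero =>
    exact le_iff_forall_lf.2 ⟨fun _ => lf_of_le_moveLeft (i := PUnit.unit) le_rfl,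
      fun j => PEmpty.elim j⟩
  | succ k ih =>
    exact le_iff_forall_lf.2 ⟨fun _ => lf_of_le_moveLeft (i := PUnit.unit) le_rfl,
      fun _ => lf_of_moveRight_le (j := PUnit.unit) ih⟩

theorem powHalf_succ_lt (k : ℕ) : powHalf.{u} (k + 1) < powHalf k :=
  ⟨powHalf_succ_le k, fun h => h.lf_moveRight PUnit.unit le_rfl⟩

theorem powHalf_add_aux_left (n : ℕ) :
    ∀ i, (powHalf.{u} (n + 1) + powHalf (n + 1)).moveLeft i ⧏ powHalf n := by
  rintro (i | i) <;> apply lf_of_lt <;> rw [lt_iff_game_lt]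
  · show (⟦0 + powHalf.{u} (n + 1)⟧ : Game.{u}) < ⟦powHalf n⟧
    rw [quot_add, quot_zero, zero_add]
    exact lt_iff_game_lt.1 (powHalf_succ_lt n)
  · show (⟦powHalf.{u} (n + 1) + 0⟧ : Game.{u}) < ⟦powHalf n⟧
    rw [quot_add, quot_zero, add_zero]
    exact lt_iff_game_lt.1 (powHalf_succ_lt n)

theorem powHalf_le_add_aux (n : ℕ) : powHalf.{u} n ≤ powHalf (n + 1) + powHalf (n + 1) := by
  have hp : (0 : Game.{u}) < ⟦powHalf.{u} (n + 1)⟧ := lt_iff_game_lt.1 (powHalf_pos (n + 1))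
  rw [le_iff_forall_lf]
  constructor
  · intro i
    rw [powHalf_moveLeft]
    apply lf_of_lt
    rw [lt_iff_game_lt, quot_add, quot_zero]
    exact add_pos hp hp
  · rintro (j | j) <;> apply lf_of_lt <;> rw [lt_iff_game_lt]
    · show (⟦powHalf.{u} n⟧ : Game.{u}) < ⟦powHalf n + powHalf (n + 1)⟧
      rw [quot_add]
      exact lt_add_of_pos_right _ hp
    · show (⟦powHalf.{u} n⟧ : Game.{u}) < ⟦powHalf (n + 1) + powHalf n⟧
      rw [quot_add]
      exact lt_add_of_pos_left _ hp

theorem add_powHalf_succ_self_eq_powHalf (n : ℕ) :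
    powHalf.{u} (n + 1) + powHalf (n + 1) ≈ powHalf n := by
  induction n with
  | zero =>
    exact ⟨le_iff_forall_lf.2 ⟨powHalf_add_aux_left 0, fun j => PEmpty.elim j⟩,
      powHalf_le_add_aux 0⟩
  | succ k ih =>
    refine ⟨le_iff_forall_lf.2 ⟨powHalf_add_aux_left (k + 1), fun j => ?_⟩,
      powHalf_le_add_aux (k + 1)⟩
    refine lf_of_moveRight_le (x := powHalf.{u} (k + 1 + 1) + powHalf (k + 1 + 1))
      (j := Sum.inl PUnit.unit) ?_
    show powHalf.{u} (k + 1) + powHalf (k + 1 + 1) ≤ powHalf k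
    rw [le_iff_game_le, quot_add, ← game_eq ih, quot_add]
    exact add_le_add le_rfl (lt_iff_game_lt.1 (powHalf_succ_lt (k + 1))).le

end SetTheory.PGame

namespace OSAux

/-! ### Game values of `powHalf` -/

def vh (k : ℕ) : Game := ⟦powHalf k⟧

lemma quot_powHalf (k : ℕ) : (⟦powHalf k⟧ : Game) = vh k := rfl

lemma vh_zero : vh 0 = 1 := by rw [vh, powHalf_zero, quot_one]

lemma vh_double (k : ℕ) : vh (k + 1) + vh (k + 1) = vh k := by
  simpa [vh] using game_eq (add_powHalf_succ_self_eq_powHalf k)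

lemma vh_pos (k : ℕ) : 0 < vh k := by
  have := lt_iff_game_lt.1 (powHalf_pos k)
  simpa [vh] using this

lemma vh_succ_le (k : ℕ) : vh (k + 1) ≤ vh k := by
  rw [← vh_double k]; exact le_add_of_nonneg_left (vh_pos _).le

lemma vh_succ_lt (k : ℕ) : vh (k + 1) < vh k := by
  rw [← vh_double k]; exact lt_add_of_pos_left _ (vh_pos _)

lemma vh_pow_smul (s k : ℕ) : (2 ^ s) • vh (k + s) = vh k := by
  induction s with
  | zero => simp
  | succ s ih =>
      have h2 : (2 : ℕ) ^ (s + 1) = 2 ^ s + 2 ^ s := by ring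
      calc (2 ^ (s + 1)) • vh (k + (s + 1))
          = (2 ^ s) • vh (k + s + 1) + (2 ^ s) • vh (k + s + 1) := by
            rw [h2, add_nsmul]; rfl
        _ = (2 ^ s) • (vh (k + s + 1) + vh (k + s + 1)) := (smul_add _ _ _).symm
        _ = (2 ^ s) • vh (k + s) := by rw [vh_double]
        _ = vh k := ih

lemma vh_smul_le {a s k : ℕ} (h : a ≤ 2 ^ s) : a • vh (k + s) ≤ vh k :=
  (nsmul_le_nsmul_left (vh_pos _).le h).trans_eq (vh_pow_smul s k)

lemma vh_le_one (k : ℕ) : vh k ≤ 1 := by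
  have := vh_smul_le (a := 1) (s := k) (k := 0) Nat.one_le_two_pow
  simpa [vh_zero] using this

lemma nsmul_vh_succ (c k : ℕ) : c • vh k = (2 * c) • vh (k + 1) := by
  rw [← vh_double k, smul_add, ← add_nsmul]
  congr 1
  ring

/-! ### canonical naturals -/

def cNat (k : ℕ) : Game := ⟦canonNat k⟧

instance canonNat_rightMoves_isEmpty (k : ℕ) : IsEmpty (canonNat k).RightMoves := by
  cases k
  · exact isEmpty_zero_rightMoves
  · exact ⟨fun j => PEmpty.elim j⟩

instance one_rightMoves_isEmpty : IsEmpty (1 : PGame.{u}).RightMoves :=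
  ⟨fun j => PEmpty.elim j⟩

lemma equiv_of_forall {G C : PGame}
    (hGL : ∀ i, G.moveLeft i ⧏ C) (hCR : ∀ j, G ⧏ C.moveRight j)
    (hCL : ∀ i, C.moveLeft i ⧏ G) (hGR : ∀ j, C ⧏ G.moveRight j) : G ≈ C :=
  ⟨le_iff_forall_lf.2 ⟨hGL, hCR⟩, le_iff_forall_lf.2 ⟨hCL, hGR⟩⟩

lemma canonNat_add_one (k : ℕ) : canonNat (k + 1) ≈ canonNat k + 1 := by
  induction k using Nat.strong_induction_on with
  | _ k ih =>
    apply equiv_of_forall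
    · intro i
      apply lf_of_lt
      rw [lt_iff_game_lt]
      show (⟦canonNat k⟧ : Game) < ⟦canonNat k + 1⟧
      rw [quot_add, quot_one]
      have h01 : (0 : Game) < 1 := by
        rw [← quot_zero, ← quot_one]; exact lt_iff_game_lt.1 PGame.zero_lt_one
      exact lt_add_of_pos_right _ h01
    · intro j
      exact isEmptyElim j
    · intro i
      apply leftMoves_add_cases i
      · intro i'
        cases k with
        | zero => exact PEmpty.elim i'
        | succ j =>
          rw [add_moveLeft_inl]
          refine lf_of_le_moveLeft (i := PUnit.unit) ?_
          show canonNat j + 1 ≤ canonNat (j + 1)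
          exact ((ih j (by omega)).2 : canonNat j + 1 ≤ canonNat (j + 1))
      · intro i'
        rw [add_moveLeft_inr]
        refine lf_of_le_moveLeft (i := PUnit.unit) ?_
        show canonNat k + 0 ≤ canonNat k
        exact (add_zero_equiv _).1
    · intro j
      exact isEmptyElim j

lemma cNat_succ (k : ℕ) : cNat (k + 1) = cNat k + 1 := by
  have := game_eq (canonNat_add_one k)
  simpa [cNat] using this

lemma cNat_eq_smul (k : ℕ) : cNat k = (k : ℤ) • (1 : Game) := by
  induction k with
  | zero => simp [cNat, canonNat]
  | succ k ih =>
      rw [cNat_succ, ih]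
      push_cast
      rw [add_zsmul]
      simp

end OSAux

namespace OSAux2
open OSAux

/-! ### monotonicity of the ordinal sum in the subordinate -/

lemma os_mono (G : PGame.{u}) : ∀ H H' : PGame.{u},
    (H ≤ H' → ordinalSum G H ≤ ordinalSum G H') ∧
    (H ⧏ H' → ordinalSum G H ⧏ ordinalSum G H') := by
  intro H
  induction H with
  | mk yl yr yL yR ihL ihR =>
    intro H'
    induction H' with
    | mk zl zr zL zR jhL jhR =>
      constructor
      · intro h
        rw [le_iff_forall_lf]
        constructor
        · rintro (i | i)
          · exact lf_of_le_moveLeft (i := Sum.inl i) le_rfl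
          · exact (ihL i ⟨zl, zr, zL, zR⟩).2 (h.moveLeft_lf i)
        · rintro (j | j)
          · exact lf_of_moveRight_le (j := Sum.inl j) le_rfl
          · exact (jhR j).2 (h.lf_moveRight j)
      · intro h
        rcases lf_iff_exists_le.1 h with ⟨i, hi⟩ | ⟨j, hj⟩
        · exact lf_of_le_moveLeft (i := Sum.inr i) ((jhL i).1 hi)
        · exact lf_of_moveRight_le (j := Sum.inr j) ((ihR j ⟨zl, zr, zL, zR⟩).1 hj)

lemma os_congr {G H H' : PGame.{u}} (h : H ≈ H') : ordinalSum G H ≈ ordinalSum G H' :=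
  ⟨(os_mono G H H').1 h.1, (os_mono G H' H).1 h.2⟩

end OSAux2

namespace OSAux3
open OSAux OSAux2

/-! ### the game `Xg n' k`, of value `n' + 2 ^ (-k)` -/

def Xg (n' : ℕ) : ℕ → PGame
  | 0 => canonNat (n' + 1)
  | k + 1 => ball (canonNat n') (Xg n' k)

lemma Xg_moveLeft (n' k : ℕ) (i) : (Xg n' k).moveLeft i = canonNat n' := by
  cases k <;> rfl

lemma Xg_val (n' : ℕ) : ∀ k, (⟦Xg n' k⟧ : Game) = cNat n' + vh k := by
  intro k
  induction k with
  | zero =>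
      show cNat (n' + 1) = cNat n' + vh 0
      rw [vh_zero, cNat_succ]
  | succ k ih =>
      have hEquiv : ball (canonNat n') (Xg n' k) ≈ canonNat n' + powHalf (k + 1) := by
        apply equiv_of_forall
        · intro i
          apply lf_of_lt
          rw [lt_iff_game_lt]
          show (⟦canonNat n'⟧ : Game) < ⟦canonNat n' + powHalf (k + 1)⟧
          rw [quot_add]
          exact lt_add_of_pos_right _ (vh_pos (k + 1))
        · intro j
          apply rightMoves_add_cases j
          · intro jc
            exact isEmptyElim jc
          · intro jp
            rw [add_moveRight_inr, powHalf_succ_moveRight]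
            refine lf_of_moveRight_le (j := PUnit.unit) ?_
            show Xg n' k ≤ canonNat n' + powHalf k
            rw [le_iff_game_le, quot_add]
            exact le_of_eq ih
        · intro i
          apply leftMoves_add_cases i
          · intro ic
            cases n' with
            | zero => exact PEmpty.elim ic
            | succ j =>
              rw [add_moveLeft_inl]
              refine lf_of_le_moveLeft (i := PUnit.unit) ?_
              show canonNat j + powHalf (k + 1) ≤ canonNat (j + 1)
              rw [le_iff_game_le, quot_add]
              show cNat j + vh (k + 1) ≤ cNat (j + 1)
              rw [cNat_succ]
              exact add_le_add_right (vh_le_one (k + 1)) _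
          · intro ip
            rw [add_moveLeft_inr, powHalf_moveLeft]
            refine lf_of_le_moveLeft (i := PUnit.unit) ?_
            show canonNat n' + 0 ≤ canonNat n'
            exact (add_zero_equiv _).1
        · intro j
          apply lf_of_lt
          rw [lt_iff_game_lt]
          show (⟦canonNat n' + powHalf (k + 1)⟧ : Game) < ⟦Xg n' k⟧
          rw [ih, quot_add]
          show cNat n' + vh (k + 1) < cNat n' + vh k
          exact add_lt_add_right (vh_succ_lt k) _
      show (⟦ball (canonNat n') (Xg n' k)⟧ : Game) = cNat n' + vh (k + 1)
      rw [game_eq hEquiv]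
      rw [quot_add]; rfl

end OSAux3

namespace OSAux4
open OSAux OSAux2 OSAux3

def dyFam (F0 : ℕ → PGame) : ℕ → ℕ → PGame
  | 0, b => F0 b
  | q + 1, b =>
      if b % 2 = 0 then dyFam F0 q (b / 2)
      else ball (dyFam F0 q ((b + 1) / 2)) (dyFam F0 q ((b - 1) / 2))

lemma dyFam_val (F0 : ℕ → PGame) (d : ℕ) (C : Game)
    (h0 : ∀ b, b ≤ 1 → (⟦F0 b⟧ : Game) = C - b • vh d ∧
      (∀ i, (⟦(F0 b).moveLeft i⟧ : Game) ≤ C - b • vh d - vh d) ∧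
      (∀ j, C - b • vh d + vh d ≤ (⟦(F0 b).moveRight j⟧ : Game))) :
    ∀ q b, b ≤ 2 ^ q → (⟦dyFam F0 q b⟧ : Game) = C - b • vh (d + q) ∧
      (∀ i, (⟦(dyFam F0 q b).moveLeft i⟧ : Game) ≤ C - b • vh (d + q) - vh (d + q)) ∧
      (∀ j, C - b • vh (d + q) + vh (d + q) ≤ (⟦(dyFam F0 q b).moveRight j⟧ : Game)) := by
  intro q
  induction q with
  | zero =>
      intro b hb
      have hb1 : b ≤ 1 := by simpa using hb
      simpa [dyFam] using h0 b hb1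
  | succ q ih =>
    intro b hb
    rw [show d + (q + 1) = d + q + 1 from by omega]
    have hpow : (2 : ℕ) ^ (q + 1) = 2 ^ q + 2 ^ q := by ring
    rw [hpow] at hb
    have hdd : vh (d + q) = vh (d + q + 1) + vh (d + q + 1) := (vh_double _).symm
    set z := vh (d + q + 1) with hz
    have hz0 : (0 : Game) ≤ z := by rw [hz]; exact (vh_pos _).le
    have hz1 : (0 : Game) < z := by rw [hz]; exact vh_pos _
    by_cases hp : b % 2 = 0
    · obtain ⟨c, rfl⟩ : ∃ c, b = c + c := ⟨b / 2, by omega⟩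
      have hc : c ≤ 2 ^ q := by omega
      have hEq : dyFam F0 (q + 1) (c + c) = dyFam F0 q c := by
        have h2 : (c + c) % 2 = 0 := by omega
        have h3 : (c + c) / 2 = c := by omega
        simp [dyFam, h2, h3]
      obtain ⟨hv, hl, hr⟩ := ih c hc
      rw [hdd] at hv hl hr
      refine ⟨?_, ?_, ?_⟩
      · rw [hEq, hv, smul_add, ← add_nsmul]
      · rw [hEq]
        intro i
        refine (hl i).trans ?_
        have e : C - c • (z + z) - (z + z) = C - (c + c) • z - z - z := by
          rw [smul_add, ← add_nsmul]; abel
        rw [e]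
        exact sub_le_self _ hz0
      · rw [hEq]
        intro j
        have h2 := hr j
        have e : C - c • (z + z) + (z + z) = C - (c + c) • z + z + z := by
          rw [smul_add, ← add_nsmul]; abel
        rw [e] at h2
        exact (le_add_of_nonneg_right hz0).trans h2
    · obtain ⟨c, rfl⟩ : ∃ c, b = 2 * c + 1 := ⟨b / 2, by omega⟩
      have hc1 : c + 1 ≤ 2 ^ q := by omega
      have hc : c ≤ 2 ^ q := by omega
      have hEq : dyFam F0 (q + 1) (2 * c + 1) = ball (dyFam F0 q (c + 1)) (dyFam F0 q c) := by
        have h3 : (2 * c + 1 + 1) / 2 = c + 1 := by omega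
        have h4 : (2 * c + 1 - 1) / 2 = c := by omega
        simp [dyFam, hp, h3, h4]
      obtain ⟨hAv, hAl, hAr⟩ := ih (c + 1) hc1
      obtain ⟨hBv, hBl, hBr⟩ := ih c hc
      rw [hdd] at hAv hAl hAr hBv hBl hBr
      set A := dyFam F0 q (c + 1) with hA
      set B := dyFam F0 q c with hB
      have eA : C - (c + 1) • (z + z) = C - (2 * c + 1) • z - z := by
        rw [smul_add, ← add_nsmul, show c + 1 + (c + 1) = 2 * c + 1 + 1 from by ring,
          succ_nsmul]
        abel
      have eB : C - c • (z + z) = C - (2 * c + 1) • z + z := by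
        rw [smul_add, ← add_nsmul, show 2 * c + 1 = c + c + 1 from by ring, succ_nsmul]
        abel
      have hCv : (⟦A + powHalf (d + q + 1)⟧ : Game) = C - (2 * c + 1) • z := by
        rw [quot_add, quot_powHalf, ← hz, hAv, eA]
        abel
      have hEquiv : ball A B ≈ A + powHalf (d + q + 1) := by
        apply equiv_of_forall
        · intro i
          apply lf_of_lt
          rw [lt_iff_game_lt]
          show (⟦A⟧ : Game) < ⟦A + powHalf (d + q + 1)⟧
          rw [quot_add, quot_powHalf, ← hz]
          exact lt_add_of_pos_right _ hz1
        · intro j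
          apply rightMoves_add_cases j
          · intro jA
            rw [add_moveRight_inl]
            refine lf_of_moveRight_le (j := PUnit.unit) ?_
            show B ≤ A.moveRight jA + powHalf (d + q + 1)
            rw [le_iff_game_le, quot_add, quot_powHalf, ← hz, hBv, eB]
            refine add_le_add_left ?_ z
            have h2 := hAr jA
            rw [eA] at h2
            refine le_trans ?_ h2
            have e : C - (2 * c + 1) • z - z + (z + z) = C - (2 * c + 1) • z + z := by abel
            rw [e]
            exact le_add_of_nonneg_right hz0
          · intro jp
            rw [add_moveRight_inr, powHalf_succ_moveRight]
            refine lf_of_moveRight_le (j := PUnit.unit) ?_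
            show B ≤ A + powHalf (d + q)
            rw [le_iff_game_le, quot_add, quot_powHalf, hdd, hBv, hAv, eB, eA]
            have e : C - (2 * c + 1) • z - z + (z + z) = C - (2 * c + 1) • z + z := by abel
            rw [e]
        · intro i
          apply leftMoves_add_cases i
          · intro iA
            rw [add_moveLeft_inl]
            refine lf_of_le_moveLeft (i := PUnit.unit) ?_
            show A.moveLeft iA + powHalf (d + q + 1) ≤ A
            rw [le_iff_game_le, quot_add, quot_powHalf, ← hz, hAv, eA]
            have h2 := hAl iA
            rw [eA] at h2
            refine (add_le_add_left h2 z).trans ?_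
            have e : C - (2 * c + 1) • z - z - (z + z) + z = C - (2 * c + 1) • z - z - z := by
              abel
            rw [e]
            exact sub_le_self _ hz0
          · intro ip
            rw [add_moveLeft_inr, powHalf_moveLeft]
            refine lf_of_le_moveLeft (i := PUnit.unit) ?_
            show A + 0 ≤ A
            exact (add_zero_equiv _).1
        · intro j
          apply lf_of_lt
          rw [lt_iff_game_lt]
          show (⟦A + powHalf (d + q + 1)⟧ : Game) < ⟦B⟧
          rw [hCv, hBv, eB]
          exact lt_add_of_pos_right _ hz1
      refine ⟨?_, ?_, ?_⟩
      · rw [hEq, game_eq hEquiv, hCv]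
      · rw [hEq]
        intro i
        show (⟦A⟧ : Game) ≤ C - (2 * c + 1) • z - z
        rw [hAv, eA]
      · rw [hEq]
        intro j
        show C - (2 * c + 1) • z + z ≤ (⟦B⟧ : Game)
        rw [hBv, eB]

end OSAux4

namespace OSAux5
open OSAux OSAux2 OSAux3 OSAux4

lemma h0Y (m : ℕ) : ∀ b, b ≤ 1 → (⟦(-canonNat (m + b) : PGame)⟧ : Game) = -cNat m - b • vh 0 ∧
    (∀ i, (⟦(-canonNat (m + b) : PGame).moveLeft i⟧ : Game) ≤ -cNat m - b • vh 0 - vh 0) ∧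
    (∀ j, -cNat m - b • vh 0 + vh 0 ≤ (⟦(-canonNat (m + b) : PGame).moveRight j⟧ : Game)) := by
  intro b hb
  interval_cases b
  · refine ⟨?_, ?_, ?_⟩
    · rw [quot_neg]
      show -(cNat m : Game) = -cNat m - 0 • vh 0
      rw [zero_nsmul, _root_.sub_zero]
    · intro i
      cases m with
      | zero => exact PEmpty.elim i
      | succ k => exact PEmpty.elim i
    · intro j
      cases m with
      | zero => exact PEmpty.elim j
      | succ k =>
        change _ ≤ (⟦-canonNat k⟧ : Game)
        rw [quot_neg]
        show -cNat (k + 1) - 0 • vh 0 + vh 0 ≤ -(cNat k : Game)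
        rw [zero_nsmul, _root_.sub_zero, vh_zero, cNat_succ]
        exact le_of_eq (by abel)
  · refine ⟨?_, ?_, ?_⟩
    · rw [quot_neg]
      show -(cNat (m + 1) : Game) = -cNat m - 1 • vh 0
      rw [one_nsmul, vh_zero, cNat_succ]
      abel
    · intro i
      exact PEmpty.elim i
    · intro j
      change _ ≤ (⟦-canonNat m⟧ : Game)
      rw [quot_neg]
      show -cNat m - 1 • vh 0 + vh 0 ≤ -(cNat m : Game)
      rw [one_nsmul, vh_zero]
      exact le_of_eq (by abel)

lemma h0X (n' m : ℕ) : ∀ b, b ≤ 1 →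
    (⟦Xg n' (m + b)⟧ : Game) = (cNat n' + vh m) - b • vh (m + 1) ∧
    (∀ i, (⟦(Xg n' (m + b)).moveLeft i⟧ : Game) ≤ (cNat n' + vh m) - b • vh (m + 1) - vh (m + 1)) ∧
    (∀ j, (cNat n' + vh m) - b • vh (m + 1) + vh (m + 1) ≤ (⟦(Xg n' (m + b)).moveRight j⟧ : Game)) := by
  intro b hb
  interval_cases b
  · refine ⟨?_, ?_, ?_⟩
    · show (⟦Xg n' m⟧ : Game) = cNat n' + vh m - 0 • vh (m + 1)
      rw [Xg_val, zero_nsmul, _root_.sub_zero]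
    · intro i
      rw [Xg_moveLeft]
      show (cNat n' : Game) ≤ cNat n' + vh m - 0 • vh (m + 1) - vh (m + 1)
      rw [zero_nsmul, _root_.sub_zero, ← vh_double m]
      have e : cNat n' + (vh (m + 1) + vh (m + 1)) - vh (m + 1) = cNat n' + vh (m + 1) := by
        abel
      rw [e]
      exact le_add_of_nonneg_right (vh_pos _).le
    · intro j
      cases m with
      | zero => exact PEmpty.elim j
      | succ k =>
        show cNat n' + vh (k + 1) - 0 • vh (k + 1 + 1) + vh (k + 1 + 1) ≤ (⟦Xg n' k⟧ : Game)
        rw [zero_nsmul, _root_.sub_zero, Xg_val]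
        calc cNat n' + vh (k + 1) + vh (k + 1 + 1)
            = cNat n' + (vh (k + 1) + vh (k + 1 + 1)) := by abel
          _ ≤ cNat n' + (vh (k + 1) + vh (k + 1)) :=
              add_le_add_right (add_le_add_right (vh_succ_le (k + 1)) _) _
          _ = cNat n' + vh k := by rw [vh_double]
  · refine ⟨?_, ?_, ?_⟩
    · show (⟦Xg n' (m + 1)⟧ : Game) = cNat n' + vh m - 1 • vh (m + 1)
      rw [Xg_val, one_nsmul, ← vh_double m]
      abel
    · intro i
      rw [Xg_moveLeft]
      show (cNat n' : Game) ≤ cNat n' + vh m - 1 • vh (m + 1) - vh (m + 1)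
      rw [one_nsmul, ← vh_double m]
      exact le_of_eq (by abel)
    · intro j
      show cNat n' + vh m - 1 • vh (m + 1) + vh (m + 1) ≤ (⟦Xg n' m⟧ : Game)
      rw [one_nsmul, Xg_val]
      exact le_of_eq (by abel)

lemma os_negCanon (n' : ℕ) : ∀ k, ordinalSum (canonNat (n' + 1)) (-canonNat k) ≈ Xg n' k := by
  intro k
  induction k with
  | zero =>
    apply equiv_of_forall
    · rintro (i | i)
      · refine lf_of_le_moveLeft (i := PUnit.unit) ?_
        show canonNat n' ≤ canonNat n'
        exact le_rfl
      · exact PEmpty.elim i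
    · intro j
      exact PEmpty.elim j
    · intro i
      refine lf_of_le_moveLeft (i := Sum.inl PUnit.unit) ?_
      show canonNat n' ≤ canonNat n'
      exact le_rfl
    · rintro (j | j)
      · exact PEmpty.elim j
      · exact PEmpty.elim j
  | succ k ih =>
    apply equiv_of_forall
    · rintro (i | i)
      · refine lf_of_le_moveLeft (i := PUnit.unit) ?_
        show canonNat n' ≤ canonNat n'
        exact le_rfl
      · exact PEmpty.elim i
    · intro j
      refine lf_of_moveRight_le (j := Sum.inr PUnit.unit) ?_
      show ordinalSum (canonNat (n' + 1)) (-canonNat k) ≤ Xg n' k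
      exact ih.1
    · intro i
      refine lf_of_le_moveLeft (i := Sum.inl PUnit.unit) ?_
      show canonNat n' ≤ canonNat n'
      exact le_rfl
    · rintro (j | j)
      · exact PEmpty.elim j
      · have h1 : Xg n' (k + 1) ⧏ Xg n' k := lf_moveRight (x := Xg n' (k + 1)) PUnit.unit
        exact lf_of_lf_of_le h1 ih.2

lemma os_dyFam (n' m : ℕ) : ∀ q b, b ≤ 2 ^ q →
    ordinalSum (canonNat (n' + 1)) (dyFam (fun b => -canonNat (m + b)) q b) ≈
      dyFam (fun b => Xg n' (m + b)) q b := by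
  intro q
  induction q with
  | zero =>
      intro b hb
      exact os_negCanon n' (m + b)
  | succ q ih =>
    intro b hb
    have hpow : (2 : ℕ) ^ (q + 1) = 2 ^ q + 2 ^ q := by ring
    rw [hpow] at hb
    by_cases hp : b % 2 = 0
    · obtain ⟨c, rfl⟩ : ∃ c, b = c + c := ⟨b / 2, by omega⟩
      have h2 : (c + c) % 2 = 0 := by omega
      have h3 : (c + c) / 2 = c := by omega
      have e1 : dyFam (fun b => -canonNat (m + b)) (q + 1) (c + c) =
          dyFam (fun b => -canonNat (m + b)) q c := by simp [dyFam, h2, h3]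
      have e2 : dyFam (fun b => Xg n' (m + b)) (q + 1) (c + c) =
          dyFam (fun b => Xg n' (m + b)) q c := by simp [dyFam, h2, h3]
      rw [e1, e2]
      exact ih c (by omega)
    · obtain ⟨c, rfl⟩ : ∃ c, b = 2 * c + 1 := ⟨b / 2, by omega⟩
      have h3 : (2 * c + 1 + 1) / 2 = c + 1 := by omega
      have h4 : (2 * c + 1 - 1) / 2 = c := by omega
      have e1 : dyFam (fun b => -canonNat (m + b)) (q + 1) (2 * c + 1) =
          ball (dyFam (fun b => -canonNat (m + b)) q (c + 1))
            (dyFam (fun b => -canonNat (m + b)) q c) := by simp [dyFam, hp, h3, h4]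
      have e2 : dyFam (fun b => Xg n' (m + b)) (q + 1) (2 * c + 1) =
          ball (dyFam (fun b => Xg n' (m + b)) q (c + 1))
            (dyFam (fun b => Xg n' (m + b)) q c) := by simp [dyFam, hp, h3, h4]
      rw [e1, e2]
      have ihA := ih (c + 1) (by omega)
      have ihB := ih c (by omega)
      have hXA := (dyFam_val (fun b => Xg n' (m + b)) (m + 1) (cNat n' + vh m) (h0X n' m)
        q (c + 1) (by omega)).1
      have hcle : canonNat n' ≤ dyFam (fun b => Xg n' (m + b)) q (c + 1) := by
        rw [le_iff_game_le]
        show (cNat n' : Game) ≤ _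
        rw [hXA]
        have hsl : (c + 1) • vh (m + 1 + q) ≤ vh m := by
          have h5 := vh_smul_le (a := c + 1) (s := q + 1) (k := m) (by omega)
          rwa [show m + (q + 1) = m + 1 + q from by omega] at h5
        have e : cNat n' + vh m - (c + 1) • vh (m + 1 + q) =
            cNat n' + (vh m - (c + 1) • vh (m + 1 + q)) := by abel
        rw [e]
        exact le_add_of_nonneg_right (sub_nonneg.2 hsl)
      apply equiv_of_forall
      · rintro (i | i)
        · refine lf_of_le_moveLeft (i := PUnit.unit) ?_
          show canonNat n' ≤ dyFam (fun b => Xg n' (m + b)) q (c + 1)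
          exact hcle
        · exact lf_of_le_of_lf ihA.1
            (moveLeft_lf (x := ball (dyFam (fun b => Xg n' (m + b)) q (c + 1))
              (dyFam (fun b => Xg n' (m + b)) q c)) PUnit.unit)
      · intro j
        refine lf_of_moveRight_le (j := Sum.inr PUnit.unit) ?_
        show ordinalSum (canonNat (n' + 1)) (dyFam (fun b => -canonNat (m + b)) q c) ≤
          dyFam (fun b => Xg n' (m + b)) q c
        exact ihB.1
      · intro i
        refine lf_of_le_moveLeft (i := Sum.inr PUnit.unit) ?_
        show dyFam (fun b => Xg n' (m + b)) q (c + 1) ≤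
          ordinalSum (canonNat (n' + 1)) (dyFam (fun b => -canonNat (m + b)) q (c + 1))
        exact ihA.2
      · rintro (j | j)
        · exact PEmpty.elim j
        · exact lf_of_lf_of_le
            (lf_moveRight (x := ball (dyFam (fun b => Xg n' (m + b)) q (c + 1))
              (dyFam (fun b => Xg n' (m + b)) q c)) PUnit.unit) ihB.2

end OSAux5


open OSAux OSAux2 OSAux3 OSAux4 OSAux5 in
/-- For integers `n ≥ 1`, `m, q ≥ 0` and `b` either `0` or odd with `0 < b < 2^q`, with
`m + b/2^q > 0`, `N` the canonical form of `n`, and any number `H` of value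
`−(m + b/2^q)`: `N : H = n − 1 + 1/2^m − b/2^{m+q+1}`. -/
theorem canon_ordinalSum_neg (n m q b : ℕ) (hn : 1 ≤ n)
    (hb : b = 0 ∨ (Odd b ∧ 0 < b ∧ b < 2 ^ q))
    (hpos : 0 < (m : ℚ) + (b : ℚ) / 2 ^ q)
    (H : PGame) (hH : H.Numeric)
    (hHval : (⟦H⟧ : Game) = -(dyadicVal m 0 + dyadicVal b q)) :
    (⟦ordinalSum (canonNat n) H⟧ : Game) =
      dyadicVal ((n : ℤ) - 1) 0 + ⟦powHalf m⟧ - dyadicVal b (m + q + 1) := by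
  obtain ⟨n', rfl⟩ : ∃ n', n = n' + 1 := ⟨n - 1, by omega⟩
  have hble : b ≤ 2 ^ q := by
    rcases hb with rfl | ⟨-, -, h⟩
    · exact Nat.zero_le _
    · exact h.le
  have Yv := (dyFam_val (fun b => -canonNat (m + b)) 0 (-cNat m) (h0Y m) q b hble).1
  have Xv := (dyFam_val (fun b => Xg n' (m + b)) (m + 1) (cNat n' + vh m) (h0X n' m)
    q b hble).1
  have hHY : H ≈ dyFam (fun b => -canonNat (m + b)) q b := by
    apply equiv_iff_game_eq.2
    rw [hHval, Yv, show 0 + q = q from by omega]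
    simp only [dyadicVal, quot_powHalf, vh_zero]
    rw [cNat_eq_smul m, natCast_zsmul, natCast_zsmul]
    abel
  have step1 : (⟦ordinalSum (canonNat (n' + 1)) H⟧ : Game) =
      ⟦ordinalSum (canonNat (n' + 1)) (dyFam (fun b => -canonNat (m + b)) q b)⟧ :=
    game_eq (os_congr hHY)
  have step2 := game_eq (os_dyFam n' m q b hble)
  rw [step1, step2, Xv, show m + 1 + q = m + q + 1 from by omega]
  simp only [dyadicVal, quot_powHalf, vh_zero]
  rw [show ((↑(n' + 1) : ℤ) - 1) = (n' : ℤ) from by push_cast; ring,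
    ← cNat_eq_smul, natCast_zsmul]
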